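/- Let ζ be a complex number with |ζ| < 1/2, and set x = 2·Re(arctan ζ) and y = −Im(log((1 + ζ)/(1 − ζ))), where arctan ζ = (i/2)(log(1 − iζ) − log(1 + iζ)) and log is the principal branch of the complex logarithm. Then Re(log((1 + ζ²)/(1 − ζ²))) = ∑_{k=1}^∞ [ L_k(1, x²/(c_k² − x²)) − M_k(1, y²/c_k²) ], where the outer series converges. -/

import Mathlib

open Filter Finset Real Topology



private lemma prod_double (t : ℝ) (N : ℕ) :
    ∏ j ∈ range (2*N), (1 - (2*t)^2 / (((j:ℝ)+1)^2 * π^2)) =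
    (∏ m ∈ range N, (1 - t^2 / (((m:ℝ)+1)^2 * π^2))) *
    ∏ m ∈ range N, (1 - t^2 / (((m:ℝ)+1/2)^2 * π^2)) := by
  induction N with
  | zero => simp
  | succ n ih =>
    have h2 : 2*(n+1) = (2*n)+1+1 := by ring
    rw [h2, prod_range_succ, prod_range_succ, ih, prod_range_succ, prod_range_succ]
    have hπ : (π:ℝ) ≠ 0 := Real.pi_ne_zero
    have h1 : ((2*n:ℕ):ℝ) + 1 = 2*(n:ℝ)+1 := by push_cast; ring
    have h3 : ((2*n+1:ℕ):ℝ) + 1 = 2*(n:ℝ)+2 := by push_cast; ring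
    rw [h1, h3]
    have e1 : (2*(n:ℝ)+1) ≠ 0 := by positivity
    have e2 : (2*(n:ℝ)+2) ≠ 0 := by positivity
    have e3 : ((n:ℝ)+1) ≠ 0 := by positivity
    have e4 : ((n:ℝ)+1/2) ≠ 0 := by positivity
    have k1 : (1 - (2*t)^2/((2*(n:ℝ)+1)^2*π^2)) = (1 - t^2/(((n:ℝ)+1/2)^2*π^2)) := by
      congr 1; rw [div_eq_div_iff (by positivity) (by positivity)]; ring
    have k2 : (1 - (2*t)^2/((2*(n:ℝ)+2)^2*π^2)) = (1 - t^2/(((n:ℝ)+1)^2*π^2)) := by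
      congr 1; rw [div_eq_div_iff (by positivity) (by positivity)]; ring
    rw [k1, k2]
    ring

private lemma sin_prod (t : ℝ) :
    Tendsto (fun n : ℕ => t * ∏ j ∈ range n, (1 - t^2 / (((j:ℝ)+1)^2 * π^2)))
      atTop (𝓝 (Real.sin t)) := by
  have hπ : (π:ℝ) ≠ 0 := Real.pi_ne_zero
  have h := Real.tendsto_euler_sin_prod (t / π)
  rw [mul_div_cancel₀ _ hπ] at h
  convert h using 2 with n
  congr 1
  refine prod_congr rfl fun j _ => ?_
  rw [div_pow, div_div, mul_comm]

private lemma cos_prod {t : ℝ} (ht : |t| < π/2) :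
    Tendsto (fun N : ℕ => ∏ k ∈ range N, (1 - t^2 / (((k:ℝ)+1/2)^2 * π^2)))
      atTop (𝓝 (Real.cos t)) := by
  have hπ : (0:ℝ) < π := Real.pi_pos
  rcases eq_or_ne t 0 with rfl | ht0
  · simpa using (tendsto_const_nhds : Tendsto (fun _ : ℕ => (1:ℝ)) atTop (𝓝 1))
  have ht2 : t^2 < π^2/4 := by
    rw [← sq_abs]; nlinarith [abs_nonneg t]
  have hsin : Real.sin t ≠ 0 := by
    intro h
    rw [Real.sin_eq_zero_iff_of_lt_of_lt (by nlinarith [abs_lt.mp ht, abs_lt.mp ht]) (by nlinarith [abs_lt.mp ht])] at h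
    exact ht0 h
  have hfac : ∀ j : ℕ, 0 < 1 - t^2 / (((j:ℝ)+1)^2 * π^2) := by
    intro j
    have h1 : (1:ℝ) ≤ ((j:ℝ)+1)^2 := by nlinarith [(Nat.cast_nonneg j : (0:ℝ) ≤ j)]
    have h2 : π^2/4 ≤ ((j:ℝ)+1)^2 * π^2 := by nlinarith
    have h3 : (0:ℝ) < ((j:ℝ)+1)^2 * π^2 := by positivity
    rw [sub_pos, div_lt_one h3]; linarith
  have hPne : ∀ N : ℕ, t * ∏ j ∈ range N, (1 - t^2 / (((j:ℝ)+1)^2 * π^2)) ≠ 0 := by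
    intro N
    exact mul_ne_zero ht0 (ne_of_gt (prod_pos fun j _ => hfac j))
  have key : ∀ N : ℕ, ∏ k ∈ range N, (1 - t^2 / (((k:ℝ)+1/2)^2 * π^2)) =
      ((2*t) * ∏ j ∈ range (2*N), (1 - (2*t)^2 / (((j:ℝ)+1)^2 * π^2))) /
      (2 * (t * ∏ j ∈ range N, (1 - t^2 / (((j:ℝ)+1)^2 * π^2)))) := by
    intro N
    rw [prod_double]
    rw [eq_div_iff (by exact mul_ne_zero two_ne_zero (hPne N))]
    ring
  have h2N : Tendsto (fun N : ℕ => (2*t) * ∏ j ∈ range (2*N), (1 - (2*t)^2 / (((j:ℝ)+1)^2 * π^2)))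
      atTop (𝓝 (Real.sin (2*t))) := by
    have hmul : Tendsto (fun N : ℕ => 2*N) atTop atTop :=
      (strictMono_nat_of_lt_succ (fun n => by omega)).tendsto_atTop
    exact (sin_prod (2*t)).comp hmul
  have hden : Tendsto (fun N : ℕ => 2 * (t * ∏ j ∈ range N, (1 - t^2 / (((j:ℝ)+1)^2 * π^2))))
      atTop (𝓝 (2 * Real.sin t)) := (sin_prod t).const_mul 2
  have hq := h2N.div hden (mul_ne_zero two_ne_zero hsin)
  have : Real.sin (2*t) / (2 * Real.sin t) = Real.cos t := by
    rw [Real.sin_two_mul]; field_simp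
  rw [this] at hq
  exact hq.congr fun N => (key N).symm


private lemma hasSum_log_cos {t : ℝ} (ht : |t| < π/2) :
    HasSum (fun k : ℕ => Real.log (1 - t^2 / (((k:ℝ)+1/2)^2 * π^2))) (Real.log (Real.cos t)) := by
  have hπ : (0:ℝ) < π := Real.pi_pos
  have ht2 : t^2 < π^2/4 := by rw [← sq_abs]; nlinarith [abs_nonneg t]
  set w : ℕ → ℝ := fun k => 1 - t^2 / (((k:ℝ)+1/2)^2 * π^2) with hw
  have hck : ∀ k : ℕ, π^2/4 ≤ (((k:ℝ)+1/2)^2 * π^2) := by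
    intro k
    have : (1:ℝ)/4 ≤ ((k:ℝ)+1/2)^2 := by nlinarith [(Nat.cast_nonneg k : (0:ℝ) ≤ k)]
    nlinarith
  have hwpos : ∀ k, 0 < w k := by
    intro k
    have h3 : (0:ℝ) < (((k:ℝ)+1/2)^2 * π^2) := by positivity
    rw [hw]; simp only
    rw [sub_pos, div_lt_one h3]
    calc t^2 < π^2/4 := ht2
    _ ≤ _ := hck k
  set ε : ℝ := 1 - t^2/(π^2/4) with hε
  have hεpos : 0 < ε := by rw [hε]; rw [sub_pos, div_lt_one (by positivity)]; exact ht2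
  have hwε : ∀ k, ε ≤ w k := by
    intro k
    have h3 : (0:ℝ) < (((k:ℝ)+1/2)^2 * π^2) := by positivity
    have h4 := div_le_div_of_nonneg_left (sq_nonneg t) (by positivity : (0:ℝ) < π^2/4) (hck k)
    rw [hw, hε]; simp only
    linarith
  -- summability
  have hbound : ∀ k : ℕ, -Real.log (w k) ≤ (4*t^2/(π^2*ε)) * (1/((k:ℝ)+1)^2) := by
    intro k
    have h3 : (0:ℝ) < (((k:ℝ)+1/2)^2 * π^2) := by positivity
    have hlog : Real.log (w k)⁻¹ ≤ (w k)⁻¹ - 1 := Real.log_le_sub_one_of_pos (inv_pos.mpr (hwpos k))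
    rw [Real.log_inv] at hlog
    have hwne := ne_of_gt (hwpos k)
    have hinv : (w k)⁻¹ - 1 = (1 - w k)/(w k) := by
      rw [eq_div_iff hwne, sub_mul, inv_mul_cancel₀ hwne]; ring
    have h5 : 1 - w k = t^2 / (((k:ℝ)+1/2)^2 * π^2) := by rw [hw]; ring
    have h6 : ((k:ℝ)+1)^2 * π^2 / 4 ≤ ((k:ℝ)+1/2)^2 * π^2 := by nlinarith [mul_nonneg (sq_nonneg ((k:ℝ))) (sq_nonneg π), mul_nonneg (Nat.cast_nonneg k : (0:ℝ) ≤ k) (sq_nonneg π)]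
    have h7 : t^2 / (((k:ℝ)+1/2)^2 * π^2) ≤ t^2 / (((k:ℝ)+1)^2 * π^2 / 4) := by
      apply div_le_div_of_nonneg_left (sq_nonneg t) (by positivity) h6
    calc -Real.log (w k) ≤ (1 - w k)/(w k) := by rw [← hinv]; exact hlog
    _ ≤ (1 - w k)/ε := by
        apply div_le_div_of_nonneg_left _ hεpos (hwε k)
        rw [h5]; positivity
    _ ≤ (t^2 / (((k:ℝ)+1)^2 * π^2 / 4))/ε := by
        apply (div_le_div_iff_of_pos_right hεpos).mpr
        rw [h5]; exact h7
    _ = (4*t^2/(π^2*ε)) * (1/((k:ℝ)+1)^2) := by field_simp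
  have hsummable : Summable (fun k : ℕ => Real.log (w k)) := by
    have hbase : Summable (fun k : ℕ => (4*t^2/(π^2*ε)) * (1/((k:ℝ)+1)^2)) := by
      apply Summable.mul_left
      have h0 : Summable (fun n : ℕ => 1/((n:ℝ))^2) := summable_one_div_nat_pow.mpr one_lt_two
      have := (summable_nat_add_iff 1).mpr h0
      exact this.congr fun k => by push_cast; ring
    have hg : Summable (fun k : ℕ => -Real.log (w k)) := by
      apply Summable.of_nonneg_of_le _ hbound hbase
      intro k
      rw [neg_nonneg]
      apply Real.log_nonpos (le_of_lt (hwpos k))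
      rw [hw]; simp only
      have : 0 ≤ t^2 / (((k:ℝ)+1/2)^2 * π^2) := by positivity
      linarith
    simpa using hg.neg
  have hS := hsummable.hasSum
  set S := ∑' k, Real.log (w k) with hSdef
  have hexp : Real.exp S = Real.cos t := by
    have h1 : Tendsto (fun N : ℕ => ∑ k ∈ range N, Real.log (w k)) atTop (𝓝 S) :=
      hS.tendsto_sum_nat
    have h2 : Tendsto (fun N : ℕ => Real.exp (∑ k ∈ range N, Real.log (w k))) atTop
        (𝓝 (Real.exp S)) := (Real.continuous_exp.tendsto S).comp h1
    have h3 : ∀ N : ℕ, Real.exp (∑ k ∈ range N, Real.log (w k)) = ∏ k ∈ range N, w k := by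
      intro N
      rw [Real.exp_sum]
      exact prod_congr rfl fun k _ => Real.exp_log (hwpos k)
    rw [funext h3] at h2
    exact tendsto_nhds_unique h2 (cos_prod ht)
  have : S = Real.log (Real.cos t) := by rw [← hexp, Real.log_exp]
  exact this ▸ hS


private lemma tsum_geom_log {r : ℝ} (hr : |r| < 1) :
    (∑' n : ℕ, r^(n+1)/((n:ℝ)+1)) = -Real.log (1-r) :=
  (Real.hasSum_pow_div_log_of_abs_lt_one hr).tsum_eq

private lemma tsum_alt_log {r : ℝ} (hr : |r| < 1) :
    (∑' n : ℕ, (-1:ℝ)^n * r^(n+1)/((n:ℝ)+1)) = Real.log (1+r) := by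
  have h := (Real.hasSum_pow_div_log_of_abs_lt_one (x := -r) (by rwa [abs_neg])).neg
  rw [neg_neg, sub_neg_eq_add] at h
  have h2 : (fun n : ℕ => -((-r)^(n+1)/((n:ℝ)+1))) = fun n : ℕ => (-1:ℝ)^n * r^(n+1)/((n:ℝ)+1) := by
    funext n
    rw [neg_pow, pow_succ]
    ring
  rw [h2] at h
  exact h.tsum_eq

private lemma abs_arg_le {z : ℂ} (h : 0 < z.re) : |Complex.arg z| ≤ |z.im| / z.re := by
  have hlt : |Complex.arg z| < π/2 := Complex.abs_arg_lt_pi_div_two_iff.mpr (Or.inl h)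
  have htan : Real.tan (Complex.arg z) = z.im / z.re := Complex.tan_arg z
  rcases lt_trichotomy (Complex.arg z) 0 with hneg | h0 | hpos
  · have h1 : 0 < -Complex.arg z := by linarith
    have h2 : -Complex.arg z < π/2 := by
      have := abs_lt.mp hlt; linarith
    have := Real.lt_tan h1 h2
    rw [Real.tan_neg, htan] at this
    calc |Complex.arg z| = -Complex.arg z := by rw [abs_of_neg hneg]
    _ ≤ -(z.im/z.re) := le_of_lt this
    _ ≤ |z.im|/z.re := by
        rw [← neg_div]
        gcongr
        exact neg_le_abs _
  · simp [h0]; positivity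
  · have h2 : Complex.arg z < π/2 := by have := abs_lt.mp hlt; linarith
    have := Real.lt_tan hpos h2
    rw [htan] at this
    calc |Complex.arg z| = Complex.arg z := abs_of_pos hpos
    _ ≤ z.im/z.re := le_of_lt this
    _ ≤ |z.im|/z.re := by
        gcongr
        exact le_abs_self _



private lemma term_eq {x y : ℝ} (hxb : |x| < 1) (hyb : |y| < 3/2) : ∀ k : ℕ,
      ((∑' n : ℕ, (-1 : ℝ) ^ n *
            (x ^ 2 / ((((k : ℝ) + 1 / 2) * Real.pi) ^ 2 - x ^ 2)) ^ (n + 1) / ((n : ℝ) + 1)) -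
        (∑' n : ℕ,
            (y ^ 2 / (((k : ℝ) + 1 / 2) * Real.pi) ^ 2) ^ (n + 1) / ((n : ℝ) + 1)))
      = Real.log (1 - y^2 / (((k:ℝ)+1/2)^2 * π^2)) - Real.log (1 - x^2 / (((k:ℝ)+1/2)^2 * π^2)) := by
  intro k
  have hπ3 : (3:ℝ) < π := Real.pi_gt_three
  have hc2 : (((k : ℝ) + 1 / 2) * π) ^ 2 = ((k:ℝ)+1/2)^2 * π^2 := mul_pow _ _ 2
  have h14 : (1:ℝ)/4 ≤ ((k:ℝ)+1/2)^2 := by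
    have := (Nat.cast_nonneg k : (0:ℝ) ≤ k)
    nlinarith
  have hπ9 : (9:ℝ) ≤ π^2 := by nlinarith
  have hcge : (9:ℝ)/4 ≤ ((k:ℝ)+1/2)^2 * π^2 := by
    calc (9:ℝ)/4 = (1/4) * 9 := by norm_num
    _ ≤ ((k:ℝ)+1/2)^2 * π^2 := mul_le_mul h14 hπ9 (by norm_num) (by positivity)
  have hx1 : x^2 < 1 := by
    rw [← sq_abs]; exact pow_lt_one₀ (abs_nonneg x) hxb two_ne_zero
  have hy94 : y^2 < 9/4 := by
    rw [← sq_abs]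
    calc |y|^2 < (3/2)^2 := by exact pow_lt_pow_left₀ hyb (abs_nonneg y) two_ne_zero
    _ = 9/4 := by norm_num
  have hcx : 0 < ((k:ℝ)+1/2)^2 * π^2 - x^2 := by linarith
  have hr1 : |x^2 / (((k:ℝ)+1/2)^2 * π^2 - x^2)| < 1 := by
    rw [abs_of_nonneg (by positivity), div_lt_one hcx]
    linarith
  have hr2 : |y^2 / (((k:ℝ)+1/2)^2 * π^2)| < 1 := by
    have h0 : (0:ℝ) < ((k:ℝ)+1/2)^2 * π^2 := by positivity
    rw [abs_of_nonneg (by positivity), div_lt_one h0]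
    linarith
  rw [hc2, tsum_alt_log hr1, tsum_geom_log hr2]
  have h0 : (0:ℝ) < ((k:ℝ)+1/2)^2 * π^2 := by positivity
  have h1a : 1 + x^2 / (((k:ℝ)+1/2)^2 * π^2 - x^2)
      = (1 - x^2 / (((k:ℝ)+1/2)^2 * π^2))⁻¹ := by
    generalize hC : ((k:ℝ)+1/2)^2 * π^2 = C at hcx h0 ⊢
    rw [inv_eq_one_div]
    field_simp
    ring
  rw [h1a, Real.log_inv]
  ring

set_option maxHeartbeats 1600000 in
/-- Dirichlet series decomposition of Scherk's surface in the
Weierstrass–Enneper parametrization: for `|ζ| < 1/2`, with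
`x = 2 Re (arctan ζ)` and `y = -Im (log ((1+ζ)/(1-ζ)))`
(`arctan ζ = (i/2)(log(1 - iζ) - log(1 + iζ))`, `log` principal),
`Re (log ((1+ζ²)/(1-ζ²))) = ∑_{k=1}^∞ [L_k(1, x²/(c_k² - x²)) - M_k(1, y²/c_k²)]`
where `c_k = (k - 1/2)π`, `L_k(1,a) = ∑_{n=1}^∞ (-1)^{n+1} aⁿ/n`,
`M_k(1,b) = ∑_{n=1}^∞ bⁿ/n`.  The outer index `k : ℕ` corresponds to the
original index `k + 1` and the inner index `n : ℕ` to the original `n + 1`. -/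
theorem scherk_weierstrass_enneper_dirichlet (ζ : ℂ) (hζ : ‖ζ‖ < 1 / 2)
    (x y : ℝ)
    (hx : x = 2 * ((Complex.I / 2) *
      (Complex.log (1 - Complex.I * ζ) - Complex.log (1 + Complex.I * ζ))).re)
    (hy : y = -(Complex.log ((1 + ζ) / (1 - ζ))).im) :
    HasSum
      (fun k : ℕ =>
        (∑' n : ℕ, (-1 : ℝ) ^ n *
            (x ^ 2 / ((((k : ℝ) + 1 / 2) * Real.pi) ^ 2 - x ^ 2)) ^ (n + 1) / ((n : ℝ) + 1)) -
        (∑' n : ℕ,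
            (y ^ 2 / (((k : ℝ) + 1 / 2) * Real.pi) ^ 2) ^ (n + 1) / ((n : ℝ) + 1)))
      ((Complex.log ((1 + ζ ^ 2) / (1 - ζ ^ 2))).re) := by
  have hπ : (0:ℝ) < π := Real.pi_pos
  have hπ3 : (3:ℝ) < π := Real.pi_gt_three
  set p := ζ.re with hp
  set q := ζ.im with hq
  have hpq : p^2 + q^2 < 1/4 := by
    have h1 : ‖ζ‖ ^ 2 = p^2 + q^2 := by
      rw [Complex.sq_norm, Complex.normSq_apply]; ring
    nlinarith [norm_nonneg ζ]
  have hpabs : |p| < 1/2 := by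
    rw [abs_lt]; constructor <;> nlinarith [sq_nonneg q, sq_nonneg (p+1/2), sq_nonneg (p-1/2)]
  have hqabs : |q| < 1/2 := by
    rw [abs_lt]; constructor <;> nlinarith [sq_nonneg p, sq_nonneg (q+1/2), sq_nonneg (q-1/2)]
  -- components of 1 ± I ζ
  have hre1 : (1 + Complex.I*ζ).re = 1 - q := by
    simp [Complex.mul_re, Complex.I_re, Complex.I_im]; ring
  have him1 : (1 + Complex.I*ζ).im = p := by
    simp [Complex.mul_im, Complex.I_re, Complex.I_im]
    rfl
  have hre2 : (1 - Complex.I*ζ).re = 1 + q := by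
    simp [Complex.mul_re, Complex.I_re, Complex.I_im]
    rfl
  have him2 : (1 - Complex.I*ζ).im = -p := by
    simp [Complex.mul_im, Complex.I_re, Complex.I_im]
    rfl
  have hre1pos : 0 < (1 + Complex.I*ζ).re := by rw [hre1]; cases abs_lt.mp hqabs; linarith
  have hre2pos : 0 < (1 - Complex.I*ζ).re := by rw [hre2]; cases abs_lt.mp hqabs; linarith
  have hne1 : (1 + Complex.I*ζ) ≠ 0 := by
    intro h; rw [h] at hre1pos; simp at hre1pos
  have hne2 : (1 - Complex.I*ζ) ≠ 0 := by
    intro h; rw [h] at hre2pos; simp at hre2pos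
  -- x as difference of args
  have hx' : x = Complex.arg (1 + Complex.I*ζ) - Complex.arg (1 - Complex.I*ζ) := by
    rw [hx]
    have h : (Complex.I/2) * (Complex.log (1 - Complex.I * ζ) - Complex.log (1 + Complex.I * ζ))
        = Complex.I * (Complex.log (1 - Complex.I * ζ) - Complex.log (1 + Complex.I * ζ)) / 2 := by
      ring
    rw [h]
    simp [Complex.div_re, Complex.mul_re, Complex.mul_im, Complex.I_re, Complex.I_im,
      Complex.normSq, Complex.sub_im, Complex.sub_re, Complex.log_im]
    ring
  -- bound on x
  have hxb : |x| < 1 := by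
    have ha1 : |Complex.arg (1 + Complex.I*ζ)| ≤ |p| / (1-q) := by
      have := abs_arg_le hre1pos
      rwa [hre1, him1] at this
    have ha2 : |Complex.arg (1 - Complex.I*ζ)| ≤ |p| / (1+q) := by
      have := abs_arg_le hre2pos
      rwa [hre2, him2, abs_neg] at this
    have hd1 : (0:ℝ) < 1 - q := by cases abs_lt.mp hqabs; linarith
    have hd2 : (0:ℝ) < 1 + q := by cases abs_lt.mp hqabs; linarith
    have key : 2*|p| < 1 - q^2 := by
      nlinarith [sq_abs p, abs_nonneg p, sq_nonneg q, sq_nonneg (q^2),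
        mul_pos hd1 hd2, sq_nonneg (1 - q^2 - 2*|p|), sq_nonneg (1 - q^2 + 2*|p|)]
    have hsum : |p|/(1-q) + |p|/(1+q) < 1 := by
      rw [div_add_div _ _ (ne_of_gt hd1) (ne_of_gt hd2), div_lt_one (mul_pos hd1 hd2)]
      nlinarith
    calc |x| ≤ |Complex.arg (1 + Complex.I*ζ)| + |Complex.arg (1 - Complex.I*ζ)| := by
          rw [hx']; exact abs_sub _ _
    _ ≤ |p|/(1-q) + |p|/(1+q) := add_le_add ha1 ha2
    _ < 1 := hsum
  -- y part
  have hζ1 : (1 - ζ) ≠ 0 := by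
    intro h
    have : ζ = 1 := by linear_combination -h
    rw [this] at hζ; simp at hζ; linarith
  have hζ1' : (1 + ζ) ≠ 0 := by
    intro h
    have : ζ = -1 := by linear_combination h
    rw [this] at hζ; simp at hζ; linarith
  have hNpos : 0 < Complex.normSq (1 - ζ) := Complex.normSq_pos.mpr hζ1
  have hQre : ((1+ζ)/(1-ζ)).re = (1 - (p^2 + q^2)) / Complex.normSq (1-ζ) := by
    rw [Complex.div_re]
    simp [Complex.normSq_apply]
    ring_nf
    rw [hp, hq]
    ring
  have hQim : ((1+ζ)/(1-ζ)).im = (2*q) / Complex.normSq (1-ζ) := by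
    rw [Complex.div_im]
    simp
    ring_nf
    rw [hq]
    ring
  have hspos : 0 < 1 - (p^2+q^2) := by nlinarith
  have hQrepos : 0 < ((1+ζ)/(1-ζ)).re := by rw [hQre]; positivity
  have hQne : (1+ζ)/(1-ζ) ≠ 0 := by
    intro h; rw [h] at hQrepos; simp at hQrepos
  have hy' : y = -Complex.arg ((1+ζ)/(1-ζ)) := by rw [hy, Complex.log_im]
  have hyb : |y| < 3/2 := by
    have h1 : |y| ≤ |((1+ζ)/(1-ζ)).im| / ((1+ζ)/(1-ζ)).re := by
      rw [hy', abs_neg]; exact abs_arg_le hQrepos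
    have h2 : |((1+ζ)/(1-ζ)).im| = 2*|q| / Complex.normSq (1-ζ) := by
      rw [hQim, abs_div, abs_of_pos hNpos, abs_mul]
      norm_num
    have h3 : |((1+ζ)/(1-ζ)).im| / ((1+ζ)/(1-ζ)).re = 2*|q|/(1 - (p^2+q^2)) := by
      rw [h2, hQre]
      rw [div_div_div_cancel_right₀]
      exact ne_of_gt hNpos
    rw [h3] at h1
    have h4 : 2*|q|/(1 - (p^2+q^2)) < 3/2 := by
      rw [div_lt_iff₀ hspos]
      nlinarith [sq_abs q, abs_nonneg q]
    linarith
  have hxhalf : |x| < π/2 := by linarith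
  have hyhalf : |y| < π/2 := by linarith
  -- cos x
  have hmulI : (1+Complex.I*ζ)*(1-Complex.I*ζ) = 1+ζ^2 := by
    ring_nf; rw [Complex.I_sq]; ring
  have habsx : ‖(1+Complex.I*ζ)‖ * ‖(1-Complex.I*ζ)‖
      = ‖(1+ζ^2)‖ := by rw [← norm_mul, hmulI]
  have hA1 : 0 < ‖(1+Complex.I*ζ)‖ := by
    simpa [norm_pos_iff] using hne1
  have hA2 : 0 < ‖(1-Complex.I*ζ)‖ := by
    simpa [norm_pos_iff] using hne2
  have hcosx : Real.cos x = (1 - (p^2+q^2)) / ‖(1+ζ^2)‖ := by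
    rw [hx', Real.cos_sub, Complex.cos_arg hne1, Complex.sin_arg _,
      Complex.cos_arg hne2, Complex.sin_arg _,
      div_mul_div_comm, div_mul_div_comm, ← add_div, hre1, him1, hre2, him2, habsx]
    congr 1
    ring
  -- cos y
  have habsy : ‖(1-ζ)‖ * ‖(1+ζ)‖ = ‖(1-ζ^2)‖ := by
    rw [← norm_mul]; congr 1; ring
  have hcosy : Real.cos y = (1 - (p^2+q^2)) / ‖(1-ζ^2)‖ := by
    rw [hy', Real.cos_neg, Complex.cos_arg hQne, hQre, norm_div]
    rw [Complex.normSq_eq_norm_sq]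
    rw [← habsy]
    have hb1 : (0:ℝ) < ‖(1-ζ)‖ := by simpa [norm_pos_iff] using hζ1
    have hb2 : (0:ℝ) < ‖(1+ζ)‖ := by simpa [norm_pos_iff] using hζ1'
    field_simp
  -- nonvanishing of 1 ± ζ^2
  have habs2 : ‖(ζ^2)‖ < 1 := by
    rw [norm_pow]; nlinarith [norm_nonneg ζ]
  have hz2ne : (1+ζ^2) ≠ 0 := by
    intro h
    have : ζ^2 = -1 := by linear_combination h
    rw [this] at habs2; simp at habs2
  have hz2ne' : (1-ζ^2) ≠ 0 := by
    intro h
    have : ζ^2 = 1 := by linear_combination -h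
    rw [this] at habs2; simp at habs2
  have hB1 : (0:ℝ) < ‖(1+ζ^2)‖ := by simpa [norm_pos_iff] using hz2ne
  have hB2 : (0:ℝ) < ‖(1-ζ^2)‖ := by simpa [norm_pos_iff] using hz2ne'
  -- value of RHS
  have hcosxpos : 0 < Real.cos x := by rw [hcosx]; positivity
  have hcosypos : 0 < Real.cos y := by rw [hcosy]; positivity
  have hRHS : (Complex.log ((1 + ζ ^ 2) / (1 - ζ ^ 2))).re
      = Real.log (Real.cos y) - Real.log (Real.cos x) := by
    rw [Complex.log_re, norm_div, Real.log_div (ne_of_gt hB1) (ne_of_gt hB2),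
      hcosx, hcosy, Real.log_div (ne_of_gt hspos) (ne_of_gt hB2),
      Real.log_div (ne_of_gt hspos) (ne_of_gt hB1)]
    ring
  rw [hRHS]
  have hterm := term_eq hxb hyb
  have hsum := (hasSum_log_cos hyhalf).sub (hasSum_log_cos hxhalf)
  exact (funext hterm : _ = _) ▸ hsum
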